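/- Comparison principle: if v, w : M → ℝ are continuous, v(x) ≤ inf_{y}(λ v(y) + c(y,x) + β) for all x (subsolution), and w(x) ≥ inf_{y}(λ w(y) + c(y,x) + β) for all x (supersolution), then for every x ∈ M, v(x) ≤ inf over sequences (x_{-n})_{n≥0} with x_0 = x of Σ_{n=0}^∞ λⁿ (c(x_{-n-1}, x_{-n}) + β) ≤ w(x). -/

import Mathlib

open Filter Topology

/-- Comparison principle for the discounted equation with constant `β`. -/
theorem discounted_comparison_principle
    {M : Type*} [MetricSpace M] [CompactSpace M] [Nonempty M]
    (c : M × M → ℝ) (hc : Continuous c)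
    (lam : ℝ) (hlam0 : 0 < lam) (hlam1 : lam < 1) (β : ℝ)
    (v w : C(M, ℝ))
    (hv : ∀ x : M, v x ≤ ⨅ y : M, (lam * v y + c (y, x) + β))
    (hw : ∀ x : M, w x ≥ ⨅ y : M, (lam * w y + c (y, x) + β))
    (x : M) :
    v x ≤ (⨅ p : {p : ℕ → M // p 0 = x},
        ∑' n : ℕ, lam ^ n * (c ((p : ℕ → M) (n + 1), (p : ℕ → M) n) + β)) ∧
    (⨅ p : {p : ℕ → M // p 0 = x},
        ∑' n : ℕ, lam ^ n * (c ((p : ℕ → M) (n + 1), (p : ℕ → M) n) + β)) ≤ w x := by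
  -- bound on `c + β`
  obtain ⟨q0, -, hq0⟩ := isCompact_univ.exists_isMaxOn Set.univ_nonempty
    ((continuous_abs.comp (hc.add continuous_const)).continuousOn :
      ContinuousOn (fun q : M × M => |c q + β|) Set.univ)
  set C := |c q0 + β| with hCdef
  have hC : ∀ q : M × M, |c q + β| ≤ C := fun q => hq0 (Set.mem_univ q)
  -- bound on `v`
  obtain ⟨mv, -, hmv⟩ := isCompact_univ.exists_isMaxOn Set.univ_nonempty
    ((continuous_abs.comp v.continuous).continuousOn :
      ContinuousOn (fun m : M => |v m|) Set.univ)
  set Cv := |v mv| with hCvdef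
  have hCv : ∀ m, |v m| ≤ Cv := fun m => hmv (Set.mem_univ m)
  -- bound on `w`
  obtain ⟨mw, -, hmw⟩ := isCompact_univ.exists_isMaxOn Set.univ_nonempty
    ((continuous_abs.comp w.continuous).continuousOn :
      ContinuousOn (fun m : M => |w m|) Set.univ)
  set Cw := |w mw| with hCwdef
  have hCw : ∀ m, |w m| ≤ Cw := fun m => hmw (Set.mem_univ m)
  -- summability
  have hgeo : Summable fun n : ℕ => C * lam ^ n :=
    (summable_geometric_of_lt_one hlam0.le hlam1).mul_left C
  have hsum : ∀ p : ℕ → M, Summable (fun n => lam ^ n * (c (p (n+1), p n) + β)) := by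
    intro p
    apply Summable.of_norm_bounded hgeo
    intro n
    rw [Real.norm_eq_abs, abs_mul, abs_pow, abs_of_pos hlam0, mul_comm]
    exact mul_le_mul_of_nonneg_right (hC _) (pow_nonneg hlam0.le n)
  -- the infimum over sequences is bounded below
  have hbddseq : BddBelow (Set.range fun p : {p : ℕ → M // p 0 = x} =>
      ∑' n : ℕ, lam ^ n * (c ((p : ℕ → M) (n + 1), (p : ℕ → M) n) + β)) := by
    refine ⟨∑' n : ℕ, -(C * lam ^ n), ?_⟩
    rintro _ ⟨p, rfl⟩
    refine Summable.tsum_le_tsum (fun n => ?_) hgeo.neg (hsum p.1)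
    have h1 : -C ≤ c ((p : ℕ → M) (n+1), (p : ℕ → M) n) + β := neg_le_of_abs_le (hC _)
    have h2 : (0:ℝ) ≤ lam ^ n := pow_nonneg hlam0.le n
    nlinarith
  haveI : Nonempty {p : ℕ → M // p 0 = x} := ⟨⟨fun _ => x, rfl⟩⟩
  constructor
  · -- subsolution side
    refine le_ciInf ?_
    rintro ⟨p, hp⟩
    have hbddv : ∀ m : M, BddBelow (Set.range fun y => lam * v y + c (y, m) + β) := by
      intro m
      refine ⟨-(lam * Cv + C), ?_⟩
      rintro _ ⟨y, rfl⟩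
      have h1 : -Cv ≤ v y := neg_le_of_abs_le (hCv y)
      have h2 : -C ≤ c (y, m) + β := neg_le_of_abs_le (hC _)
      have h3 : lam * -Cv ≤ lam * v y := mul_le_mul_of_nonneg_left h1 hlam0.le
      show -(lam * Cv + C) ≤ lam * v y + c (y, m) + β
      linarith
    have key : ∀ N, v (p 0) ≤
        (∑ n ∈ Finset.range N, lam ^ n * (c (p (n+1), p n) + β)) + lam ^ N * v (p N) := by
      intro N
      induction N with
      | zero => simp
      | succ N ih =>
        refine ih.trans ?_
        rw [Finset.sum_range_succ]
        have h1 : v (p N) ≤ lam * v (p (N+1)) + c (p (N+1), p N) + β :=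
          (hv (p N)).trans (ciInf_le (hbddv (p N)) (p (N+1)))
        have h2 := mul_le_mul_of_nonneg_left h1 (pow_nonneg hlam0.le N)
        have h3 : lam ^ N * (lam * v (p (N+1)) + c (p (N+1), p N) + β)
            = lam ^ (N+1) * v (p (N+1)) + lam ^ N * (c (p (N+1), p N) + β) := by ring
        linarith
    have hpart : Tendsto (fun N => ∑ n ∈ Finset.range N, lam ^ n * (c (p (n+1), p n) + β))
        atTop (𝓝 (∑' n : ℕ, lam ^ n * (c (p (n+1), p n) + β))) :=
      (hsum p).hasSum.tendsto_sum_nat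
    have hz : Tendsto (fun N => lam ^ N * v (p N)) atTop (𝓝 0) := by
      apply squeeze_zero_norm (fun N => ?_)
        (by simpa using (tendsto_pow_atTop_nhds_zero_of_lt_one hlam0.le hlam1).const_mul Cv)
      rw [Real.norm_eq_abs, abs_mul, abs_pow, abs_of_pos hlam0, mul_comm]
      exact mul_le_mul_of_nonneg_right (hCv _) (pow_nonneg hlam0.le N)
    have hlim := hpart.add hz
    rw [add_zero] at hlim
    have := ge_of_tendsto hlim (Eventually.of_forall key)
    simpa [hp] using this
  · -- supersolution side
    have hmin : ∀ m : M, ∃ y : M, ∀ z : M,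
        lam * w y + c (y, m) + β ≤ lam * w z + c (z, m) + β := by
      intro m
      obtain ⟨y, -, hy⟩ := isCompact_univ.exists_isMinOn Set.univ_nonempty
        (Continuous.continuousOn (by fun_prop) :
          ContinuousOn (fun y : M => lam * w y + c (y, m) + β) Set.univ)
      exact ⟨y, fun z => hy (Set.mem_univ z)⟩
    choose next hnext using hmin
    let p : ℕ → M := fun n => Nat.rec x (fun _ m => next m) n
    have hp0 : p 0 = x := rfl
    have hstep : ∀ n, lam * w (p (n+1)) + c (p (n+1), p n) + β ≤ w (p n) := by
      intro n
      have h1 : lam * w (next (p n)) + c (next (p n), p n) + β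
          ≤ ⨅ y : M, lam * w y + c (y, p n) + β := le_ciInf (fun z => hnext (p n) z)
      have h2 := hw (p n)
      show lam * w (next (p n)) + c (next (p n), p n) + β ≤ w (p n)
      linarith
    have key : ∀ N, (∑ n ∈ Finset.range N, lam ^ n * (c (p (n+1), p n) + β))
        + lam ^ N * w (p N) ≤ w x := by
      intro N
      induction N with
      | zero => simpa using le_of_eq (congrArg (fun m => w m) hp0)
      | succ N ih =>
        rw [Finset.sum_range_succ]
        have h2 := mul_le_mul_of_nonneg_left (hstep N) (pow_nonneg hlam0.le N)
        have h3 : lam ^ N * (lam * w (p (N+1)) + c (p (N+1), p N) + β)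
            = lam ^ (N+1) * w (p (N+1)) + lam ^ N * (c (p (N+1), p N) + β) := by ring
        linarith
    have hpart : Tendsto (fun N => ∑ n ∈ Finset.range N, lam ^ n * (c (p (n+1), p n) + β))
        atTop (𝓝 (∑' n : ℕ, lam ^ n * (c (p (n+1), p n) + β))) :=
      (hsum p).hasSum.tendsto_sum_nat
    have hz : Tendsto (fun N => lam ^ N * w (p N)) atTop (𝓝 0) := by
      apply squeeze_zero_norm (fun N => ?_)
        (by simpa using (tendsto_pow_atTop_nhds_zero_of_lt_one hlam0.le hlam1).const_mul Cw)
      rw [Real.norm_eq_abs, abs_mul, abs_pow, abs_of_pos hlam0, mul_comm]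
      exact mul_le_mul_of_nonneg_right (hCw _) (pow_nonneg hlam0.le N)
    have hlim := hpart.add hz
    rw [add_zero] at hlim
    have htsum : (∑' n : ℕ, lam ^ n * (c (p (n+1), p n) + β)) ≤ w x :=
      le_of_tendsto hlim (Eventually.of_forall key)
    exact (ciInf_le hbddseq ⟨p, hp0⟩).trans htsum
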